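/- For all natural numbers d, p ≥ 1 and all vectors q, k ∈ ℝ^d, the tensor-power and symmetric-power embeddings induce the same kernel: ⟨tpow_p(q), tpow_p(k)⟩ = ⟨spow_p(q), spow_p(k)⟩, and consequently linear attention with feature map tpow_p and linear attention with feature map spow_p produce identical outputs for all inputs Q_1,…,Q_t, K_1,…,K_t ∈ ℝ^d, V_1,…,V_t ∈ ℝ^v: Σ_{j=1}^{i} ⟨tpow_p(Q_i), tpow_p(K_j)⟩ V_j = Σ_{j=1}^{i} ⟨spow_p(Q_i), spow_p(K_j)⟩ V_j for every 1 ≤ i ≤ t. -/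

import Mathlib

open scoped Classical

/-- hist_k(i): the number of positions j with i_j = k. -/
def hist {p d : ℕ} (i : Fin p → Fin d) (k : Fin d) : ℕ :=
  (Finset.univ.filter (fun j => i j = k)).card

/-- The symmetric power embedding spow_p : ℝ^d → ℝ^{|NDMI^p_d|}. -/
noncomputable def spow {d : ℕ} (p : ℕ) (x : Fin d → ℝ)
    (i : {f : Fin p → Fin d // Monotone f}) : ℝ :=
  Real.sqrt ((p.factorial : ℝ) / ∏ k, ((hist i.1 k).factorial : ℝ)) * ∏ j, x (i.1 j)

lemma hist_eq_count {p d : ℕ} (f : Fin p → Fin d) (k : Fin d) :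
    hist f k = (List.ofFn f).count k := by
  have : ((List.ofFn f : List (Fin d)) : Multiset (Fin d)) = Multiset.map f Finset.univ.val := by
    simp [List.ofFn_eq_map, Fin.univ_def]
  rw [← Multiset.coe_count, this, Multiset.count_map, hist]
  rw [← Finset.filter_val]
  simp [Finset.card, eq_comm]

lemma mono_hist_inj {p d : ℕ} {f g : Fin p → Fin d} (hf : Monotone f) (hg : Monotone g)
    (h : hist f = hist g) : f = g := by
  have hperm : (List.ofFn f).Perm (List.ofFn g) := by
    rw [List.perm_iff_count]
    intro k
    rw [← hist_eq_count, ← hist_eq_count, h]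
  exact List.ofFn_injective (hperm.eq_of_sortedLE hf.sortedLE_ofFn hg.sortedLE_ofFn)

lemma exists_mono_hist {p d : ℕ} (g : Fin d → ℕ) (hg : ∑ k, g k = p) :
    ∃ f : Fin p → Fin d, Monotone f ∧ hist f = g := by
  set m : Multiset (Fin d) := ∑ k, Multiset.replicate (g k) k with hm
  have hcount : ∀ k, m.count k = g k := by
    intro k
    rw [hm, Multiset.count_sum']
    simp [Multiset.count_replicate]
  set l : List (Fin d) := m.sort (· ≤ ·) with hl
  have hlen : l.length = p := by
    rw [hl, Multiset.length_sort, hm]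
    simp [hg]
  obtain rfl : p = l.length := hlen.symm
  refine ⟨l.get, ?_, ?_⟩
  · rw [← List.sortedLE_ofFn_iff, List.ofFn_get]
    exact (Multiset.pairwise_sort _ _).sortedLE
  · funext k
    rw [hist_eq_count, List.ofFn_get, ← hcount k, ← Multiset.coe_count, hl, Multiset.sort_eq]

lemma sum_hist {p d : ℕ} (f : Fin p → Fin d) : ∑ k, hist f k = p := by
  have := Finset.card_eq_sum_card_fiberwise (s := (Finset.univ : Finset (Fin p)))
    (t := (Finset.univ : Finset (Fin d))) (f := f) (fun x _ => Finset.mem_univ _)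
  simpa [hist] using this.symm

lemma kernel_eq (d p : ℕ) (q k : Fin d → ℝ) :
    ∑ i : Fin p → Fin d, (∏ j, q (i j)) * (∏ j, k (i j))
      = ∑ i : {f : Fin p → Fin d // Monotone f}, spow p q i * spow p k i := by
  have h1 : ∑ i : Fin p → Fin d, (∏ j, q (i j)) * (∏ j, k (i j))
      = (∑ x, q x * k x) ^ p := by
    rw [Fintype.sum_pow]
    exact Finset.sum_congr rfl fun i _ => (Finset.prod_mul_distrib).symm
  rw [h1, Finset.sum_pow_eq_sum_piAntidiag]
  symm
  refine Finset.sum_bij (fun f _ => hist f.1) ?_ ?_ ?_ ?_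
  · intro f _
    rw [Finset.mem_piAntidiag]
    exact ⟨sum_hist f.1, fun i _ => Finset.mem_univ i⟩
  · intro f _ g _ h
    exact Subtype.ext (mono_hist_inj f.2 g.2 h)
  · intro g hg
    rw [Finset.mem_piAntidiag] at hg
    obtain ⟨f, hmono, hf⟩ := exists_mono_hist g hg.1
    exact ⟨⟨f, hmono⟩, Finset.mem_univ _, hf⟩
  · intro f _
    have hprod : (∏ j, q (f.1 j)) * (∏ j, k (f.1 j))
        = ∏ x, (q x * k x) ^ hist f.1 x := by
      rw [← Finset.prod_mul_distrib]
      rw [← Finset.prod_fiberwise_of_maps_to (t := (Finset.univ : Finset (Fin d)))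
        (g := f.1) (fun x _ => Finset.mem_univ _) (fun j => q (f.1 j) * k (f.1 j))]
      refine Finset.prod_congr rfl fun x _ => ?_
      rw [Finset.prod_congr rfl (fun j hj => ?_), Finset.prod_const, hist]
      rw [(Finset.mem_filter.1 hj).2]
    have hfac : (0:ℝ) < ∏ x, ((hist f.1 x).factorial : ℝ) :=
      Finset.prod_pos fun x _ => by positivity
    have hmul : (Nat.multinomial Finset.univ (hist f.1) : ℝ)
        = (p.factorial : ℝ) / ∏ x, ((hist f.1 x).factorial : ℝ) := by
      have := Nat.multinomial_spec (Finset.univ : Finset (Fin d)) (hist f.1)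
      rw [sum_hist] at this
      field_simp
      rw [mul_comm]
      exact_mod_cast congrArg (Nat.cast : ℕ → ℝ) this
    rw [spow, spow, mul_mul_mul_comm, Real.mul_self_sqrt (by positivity), hprod, hmul]

/-- For all d, p ≥ 1, tpow_p and spow_p induce the same kernel,
⟨tpow_p(q), tpow_p(k)⟩ = ⟨spow_p(q), spow_p(k)⟩ for all q, k ∈ ℝ^d, and
consequently linear attention with feature map tpow_p and with feature map
spow_p produce identical outputs for all inputs Q, K, V and all 1 ≤ i ≤ t. -/
theorem tpow_spow_same_kernel_and_attention (d p : ℕ) (hd : 1 ≤ d) (hp : 1 ≤ p) :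
    (∀ q k : Fin d → ℝ,
      ∑ i : Fin p → Fin d, (∏ j, q (i j)) * (∏ j, k (i j))
        = ∑ i : {f : Fin p → Fin d // Monotone f}, spow p q i * spow p k i)
    ∧ ∀ (t v : ℕ) (Q K : ℕ → Fin d → ℝ) (V : ℕ → Fin v → ℝ) (i : ℕ),
        1 ≤ i → i ≤ t → ∀ a : Fin v,
        ∑ j ∈ Finset.Icc 1 i,
            (∑ x : Fin p → Fin d, (∏ l, Q i (x l)) * (∏ l, K j (x l))) * V j a
          = ∑ j ∈ Finset.Icc 1 i,
              (∑ x : {f : Fin p → Fin d // Monotone f},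
                spow p (Q i) x * spow p (K j) x) * V j a := by
  refine ⟨kernel_eq d p, ?_⟩
  intro t v Q K V i _ _ a
  exact Finset.sum_congr rfl fun j _ => by rw [kernel_eq d p]
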